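/- Let K \in \mathbb{N}, let p_0, \dots, p_K \ge 0 with \sum_{k=0}^K p_k = 1 and z := \sum_{k=0}^K k\, p_k > 0, let N, \lambda, \delta \in \mathbb{R}, and let \theta : [a,b] \to \mathbb{R} be continuous. Suppose x_0, \dots, x_K : [a,b] \to \mathbb{R} are differentiable and satisfy, for every k and every t \in [a,b], x_k'(t) = -\delta\, x_k(t) + \lambda\, k\, \frac{n(t)}{z} (\theta(t) - x_k(t)), where n(t) := \sum_{j=0}^K j\, p_j\, x_j(t). Then the aggregate X(t) := N \sum_{k=0}^K p_k\, x_k(t) satisfies X'(t) = -\delta\, X(t) + \lambda\, N\, n(t) \big( \theta(t) - \frac{n(t)}{z} \big) for all t \in [a,b]. -/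

import Mathlib

open Finset

/-- In the SIS-type network model, if each degree-resolved expected trading
volume `x_k` satisfies `x_k' = -δ x_k + λ k (n/z)(θ - x_k)` with
`n(t) = ∑_j j p_j x_j(t)`, then the aggregate `X(t) = N ∑_k p_k x_k(t)` satisfies
`X' = -δ X + λ N n (θ - n/z)` on `[a,b]`. -/
theorem aggregate_trading_volume_ode (K : ℕ) (p : ℕ → ℝ)
    (hp : ∀ k ∈ Finset.range (K + 1), 0 ≤ p k)
    (hsum : ∑ k ∈ Finset.range (K + 1), p k = 1)
    (z : ℝ) (hz : z = ∑ k ∈ Finset.range (K + 1), (k : ℝ) * p k) (hzpos : 0 < z)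
    (N lam δ a b : ℝ) (θ : ℝ → ℝ) (hθ : ContinuousOn θ (Set.Icc a b))
    (x : ℕ → ℝ → ℝ) (n : ℝ → ℝ)
    (hn : n = fun t => ∑ j ∈ Finset.range (K + 1), (j : ℝ) * p j * x j t)
    (hode : ∀ k ∈ Finset.range (K + 1), ∀ t ∈ Set.Icc a b,
      HasDerivAt (x k) (-δ * x k t + lam * (k : ℝ) * (n t / z) * (θ t - x k t)) t)
    (X : ℝ → ℝ) (hX : X = fun t => N * ∑ k ∈ Finset.range (K + 1), p k * x k t) :
    ∀ t ∈ Set.Icc a b,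
      HasDerivAt X (-δ * X t + lam * N * n t * (θ t - n t / z)) t := by
  intro t ht
  have hsum' : HasDerivAt (fun s => ∑ k ∈ Finset.range (K + 1), p k * x k s)
      (∑ k ∈ Finset.range (K + 1),
        p k * (-δ * x k t + lam * (k : ℝ) * (n t / z) * (θ t - x k t))) t := by
    apply HasDerivAt.fun_sum
    intro k hk
    exact (hode k hk t ht).const_mul (p k)
  have hX' : HasDerivAt X
      (N * ∑ k ∈ Finset.range (K + 1),
        p k * (-δ * x k t + lam * (k : ℝ) * (n t / z) * (θ t - x k t))) t := by
    rw [hX]; exact hsum'.const_mul N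
  convert hX' using 1
  have hzne : z ≠ 0 := ne_of_gt hzpos
  have e1 : ∑ k ∈ Finset.range (K + 1),
      p k * (-δ * x k t + lam * (k : ℝ) * (n t / z) * (θ t - x k t))
      = -δ * (∑ k ∈ Finset.range (K + 1), p k * x k t)
        + lam * (n t / z) * θ t * (∑ k ∈ Finset.range (K + 1), (k : ℝ) * p k)
        - lam * (n t / z) * (∑ k ∈ Finset.range (K + 1), (k : ℝ) * p k * x k t) := by
    rw [Finset.mul_sum, Finset.mul_sum, Finset.mul_sum, ← Finset.sum_add_distrib,
      ← Finset.sum_sub_distrib]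
    apply Finset.sum_congr rfl
    intro k _
    ring
  have hnt : ∑ k ∈ Finset.range (K + 1), (k : ℝ) * p k * x k t = n t := by rw [hn]
  rw [e1, ← hz, hnt]
  simp only [hX]
  field_simp
  ring
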